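/- Let $K$ be a field of characteristic $0$, let $P \in K[X]$ be a monic irreducible polynomial of odd degree $n \geq 3$ whose discriminant $\Delta(P)$ is a nonzero square in $K$, and suppose $Q, R \in K[X]$ are nonzero of degree at most $n-1$ with $P Q' - P' Q = R^2$. Then for every $t \in K$, the discriminant $\Delta(P - tQ)$ is a square in $K$. -/

import Mathlib

open Polynomial

/-- The resultant of two polynomials over a field `K`, computed via the roots of the first
polynomial in an algebraic closure: `Res(f,g) = lc(f)^(deg g) * ∏_{f(α)=0} g(α)`. -/
noncomputable def polyRes {K : Type*} [Field K] (f g : K[X]) : AlgebraicClosure K :=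
  algebraMap K (AlgebraicClosure K) f.leadingCoeff ^ g.natDegree *
    (((f.map (algebraMap K (AlgebraicClosure K))).roots).map fun α => aeval α g).prod

/-- The discriminant of a polynomial over a field `K`:
`Δ(f) = (-1)^(n(n-1)/2) Res(f, f') / lc(f)`. -/
noncomputable def polyDisc {K : Type*} [Field K] (f : K[X]) : AlgebraicClosure K :=
  (-1) ^ (f.natDegree * (f.natDegree - 1) / 2) *
    (algebraMap K (AlgebraicClosure K) f.leadingCoeff)⁻¹ * polyRes f (derivative f)

section Descent

variable {K : Type*} [Field K] [CharZero K]

lemma fixed_mem_range' (x : AlgebraicClosure K)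
    (h : ∀ σ : AlgebraicClosure K ≃ₐ[K] AlgebraicClosure K, σ x = x) :
    ∃ c : K, algebraMap K (AlgebraicClosure K) c = x := by
  classical
  by_contra hc
  push_neg at hc
  have hint : IsIntegral K x := Algebra.IsIntegral.isIntegral x
  have hx : x ∉ (algebraMap K (AlgebraicClosure K)).range := by
    rintro ⟨c, rfl⟩; exact hc c rfl
  set p := minpoly K x with hp
  have hpirr : Irreducible p := minpoly.irreducible hint
  have hp0 : p ≠ 0 := minpoly.ne_zero hint
  have hdeg : 2 ≤ p.natDegree := by
    have h1 : p.degree ≠ 1 := fun h1 => hx (minpoly.degree_eq_one_iff.mp h1)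
    have h0 : 0 < p.natDegree := minpoly.natDegree_pos hint
    have hnd1 : p.natDegree ≠ 1 := fun hnd => h1 ((degree_eq_iff_natDegree_eq hp0).mpr hnd)
    omega
  set pm := p.map (algebraMap K (AlgebraicClosure K)) with hpm
  have hpm0 : pm ≠ 0 :=
    (Polynomial.map_ne_zero_iff (algebraMap K (AlgebraicClosure K)).injective).mpr hp0
  have hsep : pm.Separable := (hpirr.separable).map
  have hnodup : pm.roots.Nodup := nodup_roots hsep
  have hcard : pm.roots.card = p.natDegree := by
    rw [splits_iff_card_roots.mp (IsAlgClosed.splits pm), natDegree_map]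
  have hxroot : x ∈ pm.roots := by
    rw [mem_roots hpm0]
    have := minpoly.aeval K x
    rwa [aeval_def, ← eval_map] at this
  have h2card : 1 < pm.roots.toFinset.card := by
    rwa [Multiset.toFinset_card_of_nodup hnodup, hcard]
  obtain ⟨y, hy, hyx⟩ := Finset.exists_mem_ne h2card x
  have hyroot : (Polynomial.aeval y) (minpoly K x) = 0 := by
    have := (mem_roots hpm0).mp (Multiset.mem_toFinset.mp hy)
    rw [IsRoot, eval_map, ← aeval_def] at this
    exact this
  obtain ⟨σ, hσ⟩ :=
    minpoly.exists_algEquiv_of_root' (Algebra.IsAlgebraic.isAlgebraic (R := K) x) hyroot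
  exact hyx (by rw [← hσ, h σ])

lemma prod_aeval_roots_mem' (f g : K[X]) :
    ∃ c : K, algebraMap K (AlgebraicClosure K) c =
      (((f.map (algebraMap K (AlgebraicClosure K))).roots).map fun α =>
        (Polynomial.aeval α) g).prod := by
  apply fixed_mem_range'
  intro σ
  set F := AlgebraicClosure K
  set φ := algebraMap K F with hφ
  have hmap : Multiset.map σ (f.map φ).roots = (f.map φ).roots := by
    have h1 : ((f.map φ).map (σ : F →+* F)).roots = ((f.map φ).roots).map σ :=
      (IsAlgClosed.splits _).roots_map _
    have h2 : (f.map φ).map (σ : F →+* F) = f.map φ := by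
      rw [Polynomial.map_map]
      congr 1
      exact RingHom.ext fun a => σ.commutes a
    rw [h2] at h1
    exact h1.symm
  conv_lhs =>
    rw [map_multiset_prod, Multiset.map_map]
  calc (Multiset.map (σ ∘ fun α => (Polynomial.aeval α) g) (f.map φ).roots).prod
      = (Multiset.map ((fun α => (Polynomial.aeval α) g) ∘ σ) (f.map φ).roots).prod := by
        congr 1
        apply Multiset.map_congr rfl
        intro α _
        exact (aeval_algHom_apply σ.toAlgHom α g).symm
    _ = (Multiset.map (fun α => (Polynomial.aeval α) g) ((f.map φ).roots.map σ)).prod := by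
        rw [Multiset.map_map]
    _ = _ := by rw [hmap]

end Descent

section Swap

variable {F : Type*} [Field F] [IsAlgClosed F]

lemma swap_lemma' (p q : F[X]) (hp : p.Monic) (hq : q ≠ 0) :
    (p.roots.map fun α => q.eval α).prod =
      q.leadingCoeff ^ p.natDegree *
        (q.roots.map fun β => (-1 : F) ^ p.natDegree * p.eval β).prod := by
  have hps : p.Splits := IsAlgClosed.splits p
  have hqs : q.Splits := IsAlgClosed.splits q
  have hpc : p.roots.card = p.natDegree := splits_iff_card_roots.mp hps
  have hqfact : q = C q.leadingCoeff * (q.roots.map fun a => X - C a).prod :=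
    hqs.eq_prod_roots
  have hpfact : p = (p.roots.map fun a => X - C a).prod :=
    hps.eq_prod_roots_of_monic hp
  have hqeval : ∀ α : F, q.eval α =
      q.leadingCoeff * (q.roots.map fun β => α - β).prod := by
    intro α
    conv_lhs => rw [hqfact]
    rw [eval_mul, eval_C, eval_multiset_prod, Multiset.map_map]
    simp [Function.comp]
  have hpeval : ∀ β : F, p.eval β = (p.roots.map fun α => β - α).prod := by
    intro β
    conv_lhs => rw [hpfact]
    rw [eval_multiset_prod, Multiset.map_map]
    simp [Function.comp]
  calc (p.roots.map fun α => q.eval α).prod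
      = (p.roots.map fun α => q.leadingCoeff * (q.roots.map fun β => α - β).prod).prod := by
        congr 1; exact Multiset.map_congr rfl fun α _ => hqeval α
    _ = (p.roots.map fun _ => q.leadingCoeff).prod *
          (p.roots.map fun α => (q.roots.map fun β => α - β).prod).prod := by
        rw [← Multiset.prod_map_mul]
    _ = q.leadingCoeff ^ p.natDegree *
          (q.roots.map fun β => (p.roots.map fun α => α - β).prod).prod := by
        rw [Multiset.map_const', Multiset.prod_replicate, hpc,
          Multiset.prod_map_prod_map]
    _ = q.leadingCoeff ^ p.natDegree *
          (q.roots.map fun β => (-1 : F) ^ p.natDegree * p.eval β).prod := by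
        congr 1
        refine congrArg Multiset.prod (Multiset.map_congr rfl ?_)
        intro β _
        have : (p.roots.map fun α => α - β) = (p.roots.map fun α => β - α).map Neg.neg := by
          rw [Multiset.map_map]; apply Multiset.map_congr rfl; intro α _; simp
        rw [this, Multiset.prod_map_neg, Multiset.card_map, hpc, hpeval β]

end Swap

theorem stmt7 {K : Type*} [Field K] [CharZero K] {n : ℕ} (hn : Odd n) (hn3 : 3 ≤ n)
    (P Q R : K[X]) (hPm : P.Monic) (hPirr : Irreducible P) (hPdeg : P.natDegree = n)
    (hPdisc : ∃ s : K, s ≠ 0 ∧ polyDisc P = algebraMap K (AlgebraicClosure K) s ^ 2)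
    (hQ : Q ≠ 0) (hR : R ≠ 0)
    (hQdeg : Q.natDegree ≤ n - 1) (hRdeg : R.natDegree ≤ n - 1)
    (hW : P * derivative Q - derivative P * Q = R ^ 2) :
    ∀ t : K, ∃ s : K,
      polyDisc (P - C t * Q) = algebraMap K (AlgebraicClosure K) s ^ 2 := by
  classical
  obtain ⟨s, hs0, hsq⟩ := hPdisc
  set F := AlgebraicClosure K with hF
  set φ := algebraMap K F with hφ
  -- degree facts
  have hdeglt : ∀ t : K, (C t * Q).degree < P.degree := by
    intro t
    apply degree_lt_degree
    have h1 := natDegree_C_mul_le t Q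
    omega
  have hfm : ∀ t : K, (P - C t * Q).Monic := fun t => hPm.sub_of_left (hdeglt t)
  have hfdeg : ∀ t : K, (P - C t * Q).natDegree = n := fun t => by
    rw [← hPdeg]
    exact natDegree_eq_of_degree_eq (degree_sub_eq_left_of_degree_lt (hdeglt t))
  -- the Wronskian identity for P - t Q
  have hWt : ∀ t : K, (P - C t * Q) * derivative Q - derivative (P - C t * Q) * Q = R ^ 2 := by
    intro t
    rw [derivative_sub, derivative_C_mul]
    linear_combination hW
  -- roots facts
  have hmap0 : ∀ t : K, (P - C t * Q).map φ ≠ 0 := fun t => ((hfm t).map φ).ne_zero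
  have hScard : ∀ t : K, Multiset.card (((P - C t * Q).map φ).roots) = n := by
    intro t
    rw [splits_iff_card_roots.mp (IsAlgClosed.splits _), natDegree_map, hfdeg]
  have hroot : ∀ t : K, ∀ α ∈ ((P - C t * Q).map φ).roots,
      (Polynomial.aeval α) (P - C t * Q) = 0 := by
    intro t α hα
    have h1 := (mem_roots (hmap0 t)).mp hα
    rwa [IsRoot, eval_map, ← aeval_def] at h1
  -- pointwise identity at roots
  have hpoint : ∀ t : K, ∀ α ∈ ((P - C t * Q).map φ).roots,
      (Polynomial.aeval α) (derivative (P - C t * Q)) * (Polynomial.aeval α) Q =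
        -((Polynomial.aeval α) R) ^ 2 := by
    intro t α hα
    have h2 : (Polynomial.aeval α) (derivative (P - C t * Q)) * (Polynomial.aeval α) Q
        = (Polynomial.aeval α) (P - C t * Q) * (Polynomial.aeval α) (derivative Q) -
          (Polynomial.aeval α) R ^ 2 := by
      rw [← map_mul, ← map_mul, ← map_pow, ← map_sub]
      exact congrArg (Polynomial.aeval α) (by linear_combination -(hWt t))
    rw [hroot t α hα, zero_mul, zero_sub] at h2
    exact h2
  -- product identity
  have hprod : ∀ t : K,
      ((((P - C t * Q).map φ).roots).map fun α =>
          (Polynomial.aeval α) (derivative (P - C t * Q))).prod *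
        ((((P - C t * Q).map φ).roots).map fun α => (Polynomial.aeval α) Q).prod =
      (-1 : F) ^ n *
        (((((P - C t * Q).map φ).roots).map fun α => (Polynomial.aeval α) R).prod) ^ 2 := by
    intro t
    rw [← Multiset.prod_map_mul]
    calc ((((P - C t * Q).map φ).roots).map fun α =>
          (Polynomial.aeval α) (derivative (P - C t * Q)) * (Polynomial.aeval α) Q).prod
        = ((((P - C t * Q).map φ).roots).map fun α => -((Polynomial.aeval α) R ^ 2)).prod := by
          exact congrArg _ (Multiset.map_congr rfl (hpoint t))
      _ = (((((P - C t * Q).map φ).roots).map fun α =>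
            (Polynomial.aeval α) R ^ 2).map Neg.neg).prod := by rw [Multiset.map_map]; rfl
      _ = (-1 : F) ^ n *
            ((((P - C t * Q).map φ).roots).map fun α => (Polynomial.aeval α) R ^ 2).prod := by
          rw [Multiset.prod_map_neg, Multiset.card_map, hScard t]
      _ = _ := by rw [Multiset.prod_map_pow]
  -- the Q-product is independent of t
  have hQm0 : Q.map φ ≠ 0 := (Polynomial.map_ne_zero_iff φ.injective).mpr hQ
  have hQval : ∀ t : K,
      ((((P - C t * Q).map φ).roots).map fun α => (Polynomial.aeval α) Q).prod =
      (Q.map φ).leadingCoeff ^ n *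
        (((Q.map φ).roots).map fun β => (-1 : F) ^ n * (Polynomial.aeval β) P).prod := by
    intro t
    have heq : (fun α : F => (Polynomial.aeval α) Q) = fun α => (Q.map φ).eval α := by
      funext α; rw [eval_map, aeval_def]
    rw [heq]
    have hswap := swap_lemma' ((P - C t * Q).map φ) (Q.map φ) ((hfm t).map φ) hQm0
    rw [natDegree_map, hfdeg t] at hswap
    rw [hswap]
    congr 1
    refine congrArg Multiset.prod (Multiset.map_congr rfl ?_)
    intro β hβ
    congr 1
    have hβQ : (Polynomial.aeval β) Q = 0 := by
      have h1 := (mem_roots hQm0).mp hβ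
      rwa [IsRoot, eval_map, ← aeval_def] at h1
    rw [eval_map, ← aeval_def, map_sub, map_mul, hβQ, aeval_C, mul_zero, sub_zero]
  -- nonvanishing lemma at roots of P
  have haux : ∀ g : K[X], g ≠ 0 → g.natDegree ≤ n - 1 →
      ∀ β : F, (Polynomial.aeval β) P = 0 → (Polynomial.aeval β) g ≠ 0 := by
    intro g hg hgdeg β hβ hgev
    have hmin : minpoly K β = P := (minpoly.eq_of_irreducible_of_monic hPirr hβ hPm).symm
    have hdvd : minpoly K β ∣ g := minpoly.dvd K β hgev
    rw [hmin] at hdvd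
    have h1 := natDegree_le_of_dvd hdvd hg
    omega
  -- the constant V and its nonvanishing
  set V : F := (Q.map φ).leadingCoeff ^ n *
      (((Q.map φ).roots).map fun β => (-1 : F) ^ n * (Polynomial.aeval β) P).prod with hV
  have hV0 : V ≠ 0 := by
    apply mul_ne_zero
    · exact pow_ne_zero _ (leadingCoeff_ne_zero.mpr hQm0)
    · apply Multiset.prod_ne_zero
      rw [Multiset.mem_map]
      rintro ⟨β, hβ, hβ0⟩
      have hβP : (Polynomial.aeval β) P ≠ 0 := by
        intro hβP
        have hβQ : (Polynomial.aeval β) Q = 0 := by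
          have h1 := (mem_roots hQm0).mp hβ
          rwa [IsRoot, eval_map, ← aeval_def] at h1
        exact haux Q hQ hQdeg β hβP hβQ
      exact (mul_ne_zero (pow_ne_zero n (neg_ne_zero.mpr (one_ne_zero (α := F)))) hβP) hβ0
  -- unfolding polyDisc
  have hdisc : ∀ t : K, polyDisc (P - C t * Q) =
      (-1 : F) ^ (n * (n - 1) / 2) *
        ((((P - C t * Q).map φ).roots).map fun α =>
          (Polynomial.aeval α) (derivative (P - C t * Q))).prod := by
    intro t
    rw [polyDisc, polyRes, hfdeg t, (hfm t).leadingCoeff]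
    simp [← hφ, ← hF]
    rfl
  -- the key formula
  set E : F := (-1 : F) ^ (n * (n - 1) / 2) * ((-1 : F) ^ n * V⁻¹) with hE
  have key : ∀ t : K, polyDisc (P - C t * Q) =
      E * (((((P - C t * Q).map φ).roots).map fun α => (Polynomial.aeval α) R).prod) ^ 2 := by
    intro t
    rw [hdisc t]
    have h1 := hprod t
    rw [hQval t] at h1
    have h2 : ((((P - C t * Q).map φ).roots).map fun α =>
        (Polynomial.aeval α) (derivative (P - C t * Q))).prod =
        (-1 : F) ^ n *
          (((((P - C t * Q).map φ).roots).map fun α => (Polynomial.aeval α) R).prod) ^ 2 * V⁻¹ := by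
      exact (eq_mul_inv_iff_mul_eq₀ hV0).mpr h1
    rw [h2, hE]
    ring
  -- specialize at t = 0
  have hP0Q : P - C 0 * Q = P := by simp
  have hkey0 := key 0
  rw [hP0Q] at hkey0
  obtain ⟨r₀, hr₀⟩ := prod_aeval_roots_mem' P R
  rw [← hr₀] at hkey0
  have hρ0 : (((P.map φ).roots).map fun α => (Polynomial.aeval α) R).prod ≠ 0 := by
    apply Multiset.prod_ne_zero
    rw [Multiset.mem_map]
    rintro ⟨α, hα, hα0⟩
    have hαP : (Polynomial.aeval α) P = 0 := by
      have h1 := (mem_roots ((hPm.map φ).ne_zero)).mp hα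
      rwa [IsRoot, eval_map, ← aeval_def] at h1
    exact haux R hR hRdeg α hαP hα0
  have hr₀0 : r₀ ≠ 0 := by
    intro h
    rw [h, map_zero] at hr₀
    exact hρ0 hr₀.symm
  have hφr₀ : φ r₀ ≠ 0 := fun h => hr₀0 ((_root_.map_eq_zero φ).mp h)
  have hEeq : E = φ (s / r₀) ^ 2 := by
    have h1 := hkey0.symm.trans hsq
    rw [map_div₀, div_pow, eq_div_iff (pow_ne_zero 2 hφr₀)]
    linear_combination h1
  intro t
  obtain ⟨rt, hrt⟩ := prod_aeval_roots_mem' (P - C t * Q) R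
  refine ⟨s / r₀ * rt, ?_⟩
  rw [key t, ← hrt, hEeq, map_mul, mul_pow]
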